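/- The double sum ∑_{n=0}^∞ ∑_{m=1}^∞ 1/(4n+3)^{2m+1} equals π/8 − (1/2)·log 2. -/

import Mathlib

open Filter Finset Real
open scoped Topology

private lemma vdp_inner_sum (n : ℕ) :
    ∑' m : ℕ, (1 : ℝ) / ((4 * n + 3 : ℝ) ^ (2 * (m + 1) + 1)) =
      1 / ((4 * n + 2) * (4 * n + 3) * (4 * n + 4)) := by
  have hc : (0 : ℝ) < 4 * n + 3 := by positivity
  set c : ℝ := 4 * n + 3 with hcdef
  have hn0 : (0:ℝ) ≤ (n:ℝ) := by positivity
  have hc1 : (1 : ℝ) < c := by rw [hcdef]; linarith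
  have hr0 : (0 : ℝ) ≤ 1 / c ^ 2 := by positivity
  have hr1 : 1 / c ^ 2 < 1 := by
    rw [div_lt_one (by positivity)]
    nlinarith
  have key : ∀ m : ℕ, (1 : ℝ) / (c ^ (2 * (m + 1) + 1)) =
      (1 / c ^ 3) * (1 / c ^ 2) ^ m := by
    intro m
    rw [div_pow, one_pow, ← pow_mul, div_mul_div_comm, one_mul, ← pow_add]
    congr 1
    ring
  rw [tsum_congr key, tsum_mul_left, tsum_geometric_of_lt_one hr0 hr1]
  have h2 : (1 : ℝ) - 1 / c ^ 2 = (c^2 - 1) / c^2 := by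
    field_simp
  rw [h2]
  have hne : c ≠ 0 := ne_of_gt hc
  have : (4 * (n:ℝ) + 2) * (4 * n + 3) * (4 * n + 4) = c * (c^2 - 1) := by
    simp only [hcdef]; ring
  rw [this]
  have hcsq : c^2 - 1 ≠ 0 := by nlinarith
  field_simp

private lemma partial_sum_eq (N : ℕ) :
    ∑ n ∈ range N, (1 : ℝ) / ((4 * n + 2) * (4 * n + 3) * (4 * n + 4)) =
      (1 / 2) * (∑ i ∈ range (2 * N), (-1 : ℝ) ^ i / (2 * i + 1)
        - ∑ i ∈ range (4 * N), (-1 : ℝ) ^ i / (i + 1)) := by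
  induction N with
  | zero => simp
  | succ N ih =>
    have h2 : 2 * (N + 1) = 2 * N + 1 + 1 := by ring
    have h4 : 4 * (N + 1) = 4 * N + 1 + 1 + 1 + 1 := by ring
    rw [sum_range_succ, ih, h2, h4, sum_range_succ, sum_range_succ, sum_range_succ,
      sum_range_succ, sum_range_succ, sum_range_succ]
    have e1 : ((-1 : ℝ)) ^ (2 * N) = 1 := by
      simp [pow_mul]
    have e2 : ((-1 : ℝ)) ^ (2 * N + 1) = -1 := by rw [pow_succ, e1]; ring
    have e3 : ((-1 : ℝ)) ^ (4 * N) = 1 := by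
      have : 4 * N = 2 * (2 * N) := by ring
      rw [this]; simp [pow_mul]
    have e4 : ((-1 : ℝ)) ^ (4 * N + 1) = -1 := by rw [pow_succ, e3]; ring
    have e5 : ((-1 : ℝ)) ^ (4 * N + 1 + 1) = 1 := by rw [pow_succ, e4]; ring
    have e6 : ((-1 : ℝ)) ^ (4 * N + 1 + 1 + 1) = -1 := by rw [pow_succ, e5]; ring
    rw [e1, e2, e3, e4, e5, e6]
    push_cast
    have d1 : (0:ℝ) < 4 * N + 2 := by positivity
    have d2 : (0:ℝ) < 4 * N + 3 := by positivity
    have d3 : (0:ℝ) < 4 * N + 4 := by positivity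
    have d4 : (0:ℝ) < 2 * (2 * N) + 1 := by positivity
    have d5 : (0:ℝ) < 2 * (2 * N + 1) + 1 := by positivity
    field_simp
    ring

private lemma alt_harmonic_eq (M : ℕ) :
    ∑ i ∈ range (2 * M), (-1 : ℝ) ^ i / (i + 1) =
      (harmonic (2 * M) : ℝ) - (harmonic M : ℝ) := by
  induction M with
  | zero => simp
  | succ M ih =>
    have h2 : 2 * (M + 1) = 2 * M + 1 + 1 := by ring
    rw [h2, sum_range_succ, sum_range_succ, ih]
    have e1 : ((-1 : ℝ)) ^ (2 * M) = 1 := by simp [pow_mul]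
    have e2 : ((-1 : ℝ)) ^ (2 * M + 1) = -1 := by rw [pow_succ, e1]; ring
    rw [e1, e2, harmonic_succ (2 * M + 1), harmonic_succ (2 * M), harmonic_succ M]
    push_cast
    have d1 : (0:ℝ) < 2 * M + 1 := by positivity
    have d2 : (0:ℝ) < 2 * M + 2 := by positivity
    have d3 : (0:ℝ) < (M:ℝ) + 1 := by positivity
    field_simp
    ring

private lemma tendsto_alt_harmonic :
    Tendsto (fun M : ℕ => ∑ i ∈ range (2 * M), (-1 : ℝ) ^ i / (i + 1)) atTop
      (𝓝 (Real.log 2)) := by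
  have h := Real.tendsto_harmonic_sub_log
  have hs : Tendsto (fun M : ℕ => 2 * M) atTop atTop := by
    apply tendsto_atTop_atTop.mpr
    intro b; exact ⟨b, fun a ha => by omega⟩
  have hA := h.comp hs
  have key := (hA.sub h).add_const (Real.log 2)
  have : Real.eulerMascheroniConstant - Real.eulerMascheroniConstant + Real.log 2
      = Real.log 2 := by ring
  rw [this] at key
  apply key.congr'
  filter_upwards [eventually_ge_atTop 1] with M hM
  have hM0 : (M : ℝ) ≠ 0 := Nat.cast_ne_zero.mpr (by omega)
  rw [alt_harmonic_eq]
  have : Real.log ((2 * M : ℕ) : ℝ) = Real.log 2 + Real.log M := by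
    push_cast
    rw [← Real.log_mul (by norm_num) hM0]
  simp only [Function.comp]
  rw [this]
  ring

theorem van_der_poorten_double_sum :
    ∑' n : ℕ, ∑' m : ℕ, (1 : ℝ) / ((4 * n + 3 : ℝ) ^ (2 * (m + 1) + 1)) =
      Real.pi / 8 - (1 / 2) * Real.log 2 := by
  have hrw : ∑' n : ℕ, ∑' m : ℕ, (1 : ℝ) / ((4 * n + 3 : ℝ) ^ (2 * (m + 1) + 1))
      = ∑' n : ℕ, (1 : ℝ) / ((4 * n + 2) * (4 * n + 3) * (4 * n + 4)) :=
    tsum_congr vdp_inner_sum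
  rw [hrw]
  have hf : ∀ n : ℕ, (0:ℝ) ≤ 1 / ((4 * n + 2) * (4 * n + 3) * (4 * n + 4)) := by
    intro n; positivity
  have hs2 : Tendsto (fun N : ℕ => 2 * N) atTop atTop := by
    apply tendsto_atTop_atTop.mpr
    intro b; exact ⟨b, fun a ha => by omega⟩
  have h1 : Tendsto (fun N : ℕ => ∑ i ∈ range (2 * N), (-1 : ℝ) ^ i / (2 * i + 1))
      atTop (𝓝 (π / 4)) := Real.tendsto_sum_pi_div_four.comp hs2
  have h2 : Tendsto (fun N : ℕ => ∑ i ∈ range (4 * N), (-1 : ℝ) ^ i / (i + 1))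
      atTop (𝓝 (Real.log 2)) := by
    have := tendsto_alt_harmonic.comp hs2
    apply this.congr
    intro N
    simp only [Function.comp]
    rw [show 2 * (2 * N) = 4 * N by ring]
  have key : Tendsto (fun N : ℕ => ∑ n ∈ range N,
      (1 : ℝ) / ((4 * n + 2) * (4 * n + 3) * (4 * n + 4))) atTop
      (𝓝 (Real.pi / 8 - (1 / 2) * Real.log 2)) := by
    have := (h1.sub h2).const_mul (1/2 : ℝ)
    have heq : (1/2 : ℝ) * (π / 4 - Real.log 2) = Real.pi / 8 - (1/2) * Real.log 2 := by
      ring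
    rw [heq] at this
    apply this.congr
    intro N
    rw [partial_sum_eq]
  exact ((hasSum_iff_tendsto_nat_of_nonneg hf _).mpr key).tsum_eq
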